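/- There exists a universal constant C such that: for every nonempty finite set T ⊆ ℕ × ℕ, letting d := max_{(a,b) ∈ T} (a + b), there exists a (weakest) width-2 ABP over 𝖱⁺ in the two variables x, y, of length at most C · (d + 1), such that for every assignment of values from ℝ≥0 ∪ {∞} to x and y, the evaluation of the (1,1)-entry of the product of its matrices equals min_{(a,b) ∈ T} ( a·x + b·y ) (with the convention ∞ absorbing under addition). That is, every ∞-0 bivariate polynomial f over 𝖱⁺ is computable by a width-2 ABP of size O(degree f). -/

import Mathlib

open MvPolynomial

/-- `𝖱⁺`: the min-plus semiring on `ℝ≥0 ∪ {∞}`: tropical addition `+` is `min`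
(additive identity `0 = ∞`) and tropical multiplication `*` is ordinary
addition (multiplicative identity `1` = the real `0`). -/
abbrev TRP : Type := Tropical (WithTop NNReal)

/-- In a (weakest) ABP every matrix entry is a single variable or a constant. -/
def IsABP {S V : Type} [CommSemiring S] {w L : ℕ}
    (M : Fin L → Matrix (Fin w) (Fin w) (MvPolynomial V S)) : Prop :=
  ∀ l i j, (∃ v, M l i j = X v) ∨ (∃ c, M l i j = C c)

/-- The function computed by a (weakest) width-`w` ABP: the evaluation at an
assignment of the `(1,1)`-entry of the min-plus matrix product `M₁ ⋯ M_L`. -/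
noncomputable def ABPeval {S V : Type} [CommSemiring S] {w L : ℕ} [NeZero w]
    (M : Fin L → Matrix (Fin w) (Fin w) (MvPolynomial V S)) (a : V → S) : S :=
  eval a ((List.ofFn M).prod 0 0)

namespace Stmt11Aux

abbrev R2 : Type := MvPolynomial (Fin 2) TRP
abbrev Mat : Type := Matrix (Fin 2) (Fin 2) R2

noncomputable def mA : Mat := !![X 1, 0; 0, 1]
noncomputable def mB : Mat := !![1, 0; 0, X 0]
noncomputable def mU : Mat := !![1, 1; 0, 1]
noncomputable def mR : Mat := !![0, 0; 1, 0]

lemma pow_mA (n : ℕ) : mA ^ n = !![X 1 ^ n, 0; 0, 1] := by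
  induction n with
  | zero => simp [Matrix.one_fin_two]
  | succ n ih => rw [pow_succ, ih, mA, Matrix.mul_fin_two]; ring_nf

lemma pow_mB (n : ℕ) : mB ^ n = !![1, 0; 0, X 0 ^ n] := by
  induction n with
  | zero => simp [Matrix.one_fin_two]
  | succ n ih => rw [pow_succ, ih, mB, Matrix.mul_fin_two]; ring_nf

noncomputable def build : List (ℕ × ℕ) → List Mat
  | [] => [mR]
  | [t] => mU :: (List.replicate t.1 mB ++ [mR])
  | t :: s :: r =>
      (mU :: (List.replicate (s.2 - t.2) mA ++ List.replicate (t.1 - s.1) mB)) ++ build (s :: r)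

noncomputable def Spoly (b : ℕ) (L : List (ℕ × ℕ)) : R2 :=
  (L.map (fun t => X 0 ^ t.1 * X 1 ^ (t.2 - b))).sum

def rel (s t : ℕ × ℕ) : Prop := t.1 < s.1 ∧ s.2 < t.2

lemma Spoly_shift (b b' : ℕ) (L : List (ℕ × ℕ)) (h1 : b ≤ b') (h2 : ∀ u ∈ L, b' ≤ u.2) :
    X 1 ^ (b' - b) * Spoly b' L = Spoly b L := by
  induction L with
  | nil => simp [Spoly]
  | cons u L ih =>
    have hu := h2 u (by simp)
    have hrest : ∀ v ∈ L, b' ≤ v.2 := fun v hv => h2 v (by simp [hv])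
    simp only [Spoly, List.map_cons, List.sum_cons, mul_add] at *
    rw [ih hrest]
    congr 1
    rw [mul_left_comm, ← pow_add]
    congr 2
    omega

lemma build_prod (r : List (ℕ × ℕ)) : ∀ t : ℕ × ℕ, List.Pairwise rel (t :: r) →
    (build (t :: r)).prod = !![Spoly t.2 (t :: r), 0; X 0 ^ t.1, 0] := by
  induction r with
  | nil =>
    intro t _
    have hS : Spoly t.2 [t] = X 0 ^ t.1 := by
      simp [Spoly]
    rw [show build [t] = mU :: (List.replicate t.1 mB ++ [mR]) from rfl]
    rw [List.prod_cons, List.prod_append, List.prod_replicate, List.prod_singleton, pow_mB, hS,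
      mU, mR, Matrix.mul_fin_two, Matrix.mul_fin_two]
    simp
  | cons s r ih =>
    intro t hp
    have hts : rel t s := (List.pairwise_cons.mp hp).1 s (by simp)
    obtain ⟨hts1, hts2⟩ := hts
    have hp' : List.Pairwise rel (s :: r) := (List.pairwise_cons.mp hp).2
    have hmin : ∀ u ∈ s :: r, s.2 ≤ u.2 := by
      intro u hu
      rcases List.mem_cons.mp hu with h | h
      · exact le_of_eq (by rw [h])
      · exact le_of_lt ((List.pairwise_cons.mp hp').1 u h).2
    have ihs := ih s hp'
    have hshift := Spoly_shift t.2 s.2 (s :: r) (le_of_lt hts2) hmin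
    have hS : Spoly t.2 (t :: s :: r) = X 0 ^ t.1 + X 1 ^ (s.2 - t.2) * Spoly s.2 (s :: r) := by
      rw [hshift]
      simp [Spoly]
    rw [show build (t :: s :: r) =
      (mU :: (List.replicate (s.2 - t.2) mA ++ List.replicate (t.1 - s.1) mB)) ++ build (s :: r)
      from rfl]
    rw [List.prod_append, List.prod_cons, List.prod_append, List.prod_replicate,
      List.prod_replicate, pow_mA, pow_mB, ihs, mU, hS]
    rw [Matrix.mul_fin_two, Matrix.mul_fin_two, Matrix.mul_fin_two]
    have hpow : (X 0 : R2) ^ (t.1 - s.1) * X 0 ^ s.1 = X 0 ^ t.1 := by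
      rw [← pow_add]
      congr 1
      omega
    ext i j
    fin_cases i <;> fin_cases j <;> simp [← hpow] <;> ring

noncomputable def full (L : List (ℕ × ℕ)) : List Mat :=
  List.replicate L.headI.2 mA ++ build L

lemma full_entry (t : ℕ × ℕ) (r : List (ℕ × ℕ)) (hp : List.Pairwise rel (t :: r)) :
    (full (t :: r)).prod 0 0 = ((t :: r).map (fun u => X 0 ^ u.1 * X 1 ^ u.2)).sum := by
  have hmin : ∀ u ∈ t :: r, t.2 ≤ u.2 := by
    intro u hu
    rcases List.mem_cons.mp hu with h | h
    · exact le_of_eq (by rw [h])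
    · exact le_of_lt ((List.pairwise_cons.mp hp).1 u h).2
  have hshift := Spoly_shift 0 t.2 (t :: r) (Nat.zero_le _) hmin
  rw [full, List.prod_append, List.prod_replicate, pow_mA, build_prod r t hp]
  rw [show (t :: r).headI = t from rfl, Matrix.mul_fin_two]
  have h00 : (!![X 1 ^ t.2 * Spoly t.2 (t :: r) + 0 * X 0 ^ t.1,
      X 1 ^ t.2 * 0 + 0 * 0; 0 * Spoly t.2 (t :: r) + 1 * X 0 ^ t.1, 0 * 0 + 1 * 0] :
      Mat) 0 0 = X 1 ^ t.2 * Spoly t.2 (t :: r) + 0 * X 0 ^ t.1 := rfl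
  rw [h00]
  rw [zero_mul, add_zero, show X 1 ^ t.2 = (X 1 : R2) ^ (t.2 - 0) from by rw [Nat.sub_zero],
    hshift]
  simp [Spoly]

lemma mem_build : ∀ (L : List (ℕ × ℕ)) (M : Mat), M ∈ build L →
    M = mA ∨ M = mB ∨ M = mU ∨ M = mR
  | [], M, h => by
    simp only [build, List.mem_singleton] at h
    tauto
  | [t], M, h => by
    simp only [build, List.mem_cons, List.mem_append, List.mem_singleton] at h
    rcases h with h | h | h
    · tauto
    · exact Or.inr (Or.inl (List.eq_of_mem_replicate h))
    · tauto
  | t :: s :: r, M, h => by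
    simp only [build, List.cons_append, List.mem_cons, List.mem_append] at h
    rcases h with h | h | h
    · tauto
    · rcases h with h | h
      · exact Or.inl (List.eq_of_mem_replicate h)
      · exact Or.inr (Or.inl (List.eq_of_mem_replicate h))
    · exact mem_build (s :: r) M h

lemma mem_full (L : List (ℕ × ℕ)) (M : Mat) (h : M ∈ full L) :
    M = mA ∨ M = mB ∨ M = mU ∨ M = mR := by
  rcases List.mem_append.mp h with h | h
  · exact Or.inl (List.eq_of_mem_replicate h)
  · exact mem_build L M h

lemma abp_entries (M : Mat) (hM : M = mA ∨ M = mB ∨ M = mU ∨ M = mR) (i j : Fin 2) :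
    (∃ v, M i j = X v) ∨ (∃ c, M i j = C c) := by
  rcases hM with rfl | rfl | rfl | rfl <;> fin_cases i <;> fin_cases j <;>
    simp only [mA, mB, mU, mR, Matrix.cons_val', Matrix.cons_val_zero, Matrix.cons_val_one,
      Matrix.head_cons, Matrix.empty_val', Matrix.cons_val_fin_one, Matrix.head_fin_const] <;>
    first
      | exact Or.inl ⟨0, rfl⟩
      | exact Or.inl ⟨1, rfl⟩
      | exact Or.inr ⟨0, C_0.symm⟩
      | exact Or.inr ⟨1, C_1.symm⟩

lemma build_length : ∀ (r : List (ℕ × ℕ)) (t : ℕ × ℕ) (d : ℕ),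
    List.Pairwise rel (t :: r) → (∀ u ∈ t :: r, u.1 ≤ d ∧ u.2 ≤ d) →
    (build (t :: r)).length + t.2 ≤ r.length + t.1 + d + 2 := by
  intro r
  induction r with
  | nil =>
    intro t d _ hd
    have := hd t (by simp)
    simp only [build, List.length_cons, List.length_append, List.length_replicate,
      List.length_singleton, List.length_nil]
    omega
  | cons s r ih =>
    intro t d hp hd
    have hts : rel t s := (List.pairwise_cons.mp hp).1 s (by simp)
    obtain ⟨hts1, hts2⟩ := hts
    have hp' : List.Pairwise rel (s :: r) := (List.pairwise_cons.mp hp).2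
    have hd' : ∀ u ∈ s :: r, u.1 ≤ d ∧ u.2 ≤ d := fun u hu => hd u (by simp [List.mem_cons.mp hu])
    have hih := ih s d hp' hd'
    simp only [build, List.cons_append, List.length_cons, List.length_append,
      List.length_replicate] at *
    omega

lemma chain_length : ∀ (L : List (ℕ × ℕ)), List.Pairwise rel L → L.length ≤ L.headI.1 + 1 := by
  intro L
  induction L with
  | nil => simp
  | cons t r ih =>
    intro hp
    cases r with
    | nil => simp
    | cons s r' =>
      have hts : rel t s := (List.pairwise_cons.mp hp).1 s (by simp)
      obtain ⟨hts1, hts2⟩ := hts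
      have := ih (List.pairwise_cons.mp hp).2
      simp only [List.headI, List.length_cons] at *
      omega

lemma trp_one_add (h : TRP) : 1 + h = 1 := by
  apply Tropical.add_eq_left
  rw [← Tropical.untrop_le_iff, Tropical.untrop_one]
  exact zero_le

lemma g_absorb (a : Fin 2 → TRP) {s t : ℕ × ℕ} (h1 : s.1 ≤ t.1) (h2 : s.2 ≤ t.2) :
    (a 0 ^ s.1 * a 1 ^ s.2) + (a 0 ^ t.1 * a 1 ^ t.2) = a 0 ^ s.1 * a 1 ^ s.2 := by
  have e : (a 0 ^ s.1 * a 1 ^ s.2) * (a 0 ^ (t.1 - s.1) * a 1 ^ (t.2 - s.2)) =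
      a 0 ^ t.1 * a 1 ^ t.2 := by
    rw [mul_mul_mul_comm, ← pow_add, ← pow_add, Nat.add_sub_cancel' h1, Nat.add_sub_cancel' h2]
  calc (a 0 ^ s.1 * a 1 ^ s.2) + (a 0 ^ t.1 * a 1 ^ t.2)
      = (a 0 ^ s.1 * a 1 ^ s.2) * 1 +
        (a 0 ^ s.1 * a 1 ^ s.2) * (a 0 ^ (t.1 - s.1) * a 1 ^ (t.2 - s.2)) := by rw [mul_one, e]
    _ = (a 0 ^ s.1 * a 1 ^ s.2) * (1 + (a 0 ^ (t.1 - s.1) * a 1 ^ (t.2 - s.2))) := by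
        rw [mul_add]
    _ = a 0 ^ s.1 * a 1 ^ s.2 := by rw [trp_one_add, mul_one]

lemma absorb_finset (F G : Finset (ℕ × ℕ)) (g : ℕ × ℕ → TRP)
    (hdom : ∀ t ∈ G, ∃ s ∈ F, g s + g t = g s) :
    ∑ u ∈ F, g u + ∑ u ∈ G, g u = ∑ u ∈ F, g u := by
  classical
  induction G using Finset.induction_on with
  | empty => simp
  | @insert t G ht ih =>
    have h1 : ∑ u ∈ F, g u + g t = ∑ u ∈ F, g u := by
      obtain ⟨s, hs, habs⟩ := hdom t (Finset.mem_insert_self _ _)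
      rw [← Finset.add_sum_erase F g hs, add_right_comm, habs]
    rw [Finset.sum_insert ht, ← add_assoc, h1,
      ih (fun u hu => hdom u (Finset.mem_insert_of_mem hu))]

lemma exists_chain : ∀ (n : ℕ) (T : Finset (ℕ × ℕ)), T.card ≤ n → T.Nonempty →
    ∃ L : List (ℕ × ℕ), L ≠ [] ∧ L.Pairwise rel ∧ (∀ x ∈ L, x ∈ T) ∧
      ∀ t ∈ T, ∃ x ∈ L, x.1 ≤ t.1 ∧ x.2 ≤ t.2 := by
  intro n
  induction n with
  | zero =>
    intro T hc hne
    have := Finset.card_pos.mpr hne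
    omega
  | succ n ih =>
    intro T hc hne
    classical
    set Tb := T.filter (fun u => u.2 = T.inf' hne (fun v => v.2)) with hTbdef
    have hTbne : Tb.Nonempty := by
      obtain ⟨i, hi, hieq⟩ := Finset.exists_mem_eq_inf' hne (fun v => v.2)
      exact ⟨i, Finset.mem_filter.mpr ⟨hi, hieq.symm⟩⟩
    obtain ⟨m, hmTb, hma⟩ := Finset.exists_mem_eq_inf' hTbne (fun v => v.1)
    have hmT : m ∈ T := (Finset.mem_filter.mp hmTb).1
    have hmb : m.2 = T.inf' hne (fun v => v.2) := (Finset.mem_filter.mp hmTb).2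
    have hminb : ∀ u ∈ T, m.2 ≤ u.2 := fun u hu => hmb ▸ Finset.inf'_le _ hu
    have hmina : ∀ u ∈ T, u.2 = m.2 → m.1 ≤ u.1 := by
      intro u hu h2
      have huTb : u ∈ Tb := Finset.mem_filter.mpr ⟨hu, by rw [h2, hmb]⟩
      rw [← hma]
      exact Finset.inf'_le _ huTb
    set T2 := T.filter (fun u => u.1 < m.1) with hT2def
    by_cases h2 : T2.Nonempty
    · have hmem2 : m ∉ T2 := by
        simp [hT2def, Finset.mem_filter]
      have hcard : T2.card < T.card :=
        Finset.card_lt_card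
          (((Finset.ssubset_iff_of_subset (Finset.filter_subset _ _)).mpr ⟨m, hmT, hmem2⟩))
      obtain ⟨L2, hL2ne, hL2p, hL2mem, hL2dom⟩ := ih T2 (by omega) h2
      refine ⟨m :: L2, by simp, ?_, ?_, ?_⟩
      · rw [List.pairwise_cons]
        refine ⟨?_, hL2p⟩
        intro x hx
        have hxT2 : x ∈ T2 := hL2mem x hx
        have hx1 : x.1 < m.1 := (Finset.mem_filter.mp hxT2).2
        have hxT : x ∈ T := (Finset.mem_filter.mp hxT2).1
        have hle : m.2 ≤ x.2 := hminb x hxT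
        refine ⟨hx1, lt_of_le_of_ne hle ?_⟩
        intro heq
        have := hmina x hxT heq.symm
        omega
      · intro x hx
        rcases List.mem_cons.mp hx with rfl | h
        · exact hmT
        · exact (Finset.mem_filter.mp (hL2mem x h)).1
      · intro u hu
        by_cases hlt : u.1 < m.1
        · obtain ⟨x, hx, hle⟩ := hL2dom u (Finset.mem_filter.mpr ⟨hu, hlt⟩)
          exact ⟨x, List.mem_cons_of_mem _ hx, hle⟩
        · exact ⟨m, List.mem_cons_self, by omega, hminb u hu⟩
    · refine ⟨[m], by simp, List.pairwise_singleton _ _, by simpa using hmT, ?_⟩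
      intro u hu
      have hlt : ¬ u.1 < m.1 := fun h => h2 ⟨u, Finset.mem_filter.mpr ⟨hu, h⟩⟩
      exact ⟨m, List.mem_singleton_self _, by omega, hminb u hu⟩

end Stmt11Aux

open Stmt11Aux

/-- there is a universal constant `C` such that for every nonempty
finite set `T ⊆ ℕ × ℕ`, with `d := max_{(a,b) ∈ T} (a+b)`, there is a weakest
width-2 ABP over `𝖱⁺` in the two variables `x, y` (indexed by `Fin 2`), of
length at most `C · (d+1)`, computing the ∞-0 bivariate polynomial function
`(x,y) ↦ min_{(a,b) ∈ T} (a·x + b·y)` (in tropical notation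
`∑ t ∈ T, x ^ t.1 * y ^ t.2`). -/
theorem stmt11 : ∃ C : ℕ,
    ∀ T : Finset (ℕ × ℕ), T.Nonempty →
      ∃ L : ℕ, L ≤ C * (T.sup (fun t => t.1 + t.2) + 1) ∧
        ∃ M : Fin L → Matrix (Fin 2) (Fin 2) (MvPolynomial (Fin 2) TRP),
          IsABP M ∧
          ∀ a : Fin 2 → TRP,
            ABPeval M a = ∑ t ∈ T, (a 0) ^ t.1 * (a 1) ^ t.2 := by
  classical
  refine ⟨5, ?_⟩
  intro T hT
  set d := T.sup (fun t => t.1 + t.2) with hd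
  obtain ⟨L, hLne, hLp, hLmem, hLdom⟩ := exists_chain T.card T le_rfl hT
  obtain ⟨t, r, rfl⟩ := List.exists_cons_of_ne_nil hLne
  have hdbound : ∀ u ∈ t :: r, u.1 ≤ d ∧ u.2 ≤ d := by
    intro u hu
    have huT := hLmem u hu
    have hsup : u.1 + u.2 ≤ d := Finset.le_sup (f := fun t => t.1 + t.2) huT
    omega
  refine ⟨(full (t :: r)).length, ?_, fun i => (full (t :: r)).get i, ?_, ?_⟩
  · have hb := build_length r t d hLp hdbound
    have hcl := chain_length (t :: r) hLp
    have ht1 : t.1 ≤ d := (hdbound t (by simp)).1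
    have ht2 : t.2 ≤ d := (hdbound t (by simp)).2
    have hfl : (full (t :: r)).length = t.2 + (build (t :: r)).length := by
      simp [full]
    simp only [List.headI, List.length_cons] at *
    omega
  · intro l i j
    exact abp_entries _ (mem_full _ _ (List.get_mem _ l)) i j
  · intro a
    simp only [ABPeval]
    rw [List.ofFn_get, full_entry t r hLp]
    have hev : eval a (((t :: r).map fun u => (X 0 : R2) ^ u.1 * X 1 ^ u.2).sum)
        = ((t :: r).map fun u => a 0 ^ u.1 * a 1 ^ u.2).sum := by
      rw [map_list_sum, List.map_map]
      simp [Function.comp_def]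
    rw [hev]
    have hnd : (t :: r).Nodup :=
      hLp.imp (fun hab heq => by rw [heq] at hab; exact lt_irrefl _ hab.1)
    rw [← List.sum_toFinset (fun u : ℕ × ℕ => a 0 ^ u.1 * a 1 ^ u.2) hnd]
    have hsub : (t :: r).toFinset ⊆ T := fun x hx => hLmem x (List.mem_toFinset.mp hx)
    have habs := absorb_finset ((t :: r).toFinset) (T \ (t :: r).toFinset)
        (fun u => a 0 ^ u.1 * a 1 ^ u.2) ?_
    · rw [← Finset.sum_sdiff hsub, add_comm]
      exact habs.symm
    · intro u hu
      obtain ⟨x, hx, hx1, hx2⟩ := hLdom u (Finset.mem_sdiff.mp hu).1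
      exact ⟨x, List.mem_toFinset.mpr hx, g_absorb a hx1 hx2⟩
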